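/- The Williamson transform is multiplicative with respect to the Kendall convolution: if ν₁, ν₂ are probability measures on [0,∞) and ν₁ △_α ν₂ denotes their Kendall convolution, then ∫ (1 - (xt)^α)₊ (ν₁ △_α ν₂)(dx) = (∫ (1 - (xt)^α)₊ ν₁(dx)) · (∫ (1 - (xt)^α)₊ ν₂(dx)) for all t ≥ 0. -/

import Mathlib

open MeasureTheory Real Filter Set

lemma williamson_interval_calc (a b c : ℝ) (hc0 : 0 < c) (hc1 : c < 1) :
    ∫ u in (0:ℝ)..c, (1 - a*b/(1-u)^2) = c - a*b*((1-c)⁻¹ - 1) := by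
  have hcont : ContinuousOn (fun u : ℝ => a*b/(1-u)^2) (Set.uIcc 0 c) := by
    apply continuousOn_const.div
    · exact ((continuous_const.sub continuous_id).pow 2).continuousOn
    · intro u hu
      rw [Set.uIcc_of_le hc0.le] at hu
      have h1 : u < 1 := lt_of_le_of_lt hu.2 hc1
      have h2 : (0:ℝ) < 1 - u := by linarith
      exact (pow_pos h2 2).ne'
  have h2 : IntervalIntegrable (fun u : ℝ => a*b/(1-u)^2) volume 0 c :=
    hcont.intervalIntegrable
  rw [intervalIntegral.integral_sub intervalIntegrable_const h2]
  have e1 : ∫ u in (0:ℝ)..c, (1:ℝ) = c := by simp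
  have e2 : ∫ u in (0:ℝ)..c, a*b/(1-u)^2 = a*b*((1-c)⁻¹ - 1) := by
    have heq : ∀ u : ℝ, a*b/(1-u)^2 = a*b * (1-u)^(-2:ℤ) := by
      intro u
      rw [zpow_neg, ← div_eq_mul_inv]
      norm_cast
    simp_rw [heq]
    rw [intervalIntegral.integral_const_mul]
    have e3 : ∫ u in (0:ℝ)..c, (1-u)^(-2:ℤ) = ∫ v in (1-c)..(1-0:ℝ), v^(-2:ℤ) := by
      rw [← intervalIntegral.integral_comp_sub_left (fun v : ℝ => v^(-2:ℤ)) 1]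
    rw [e3]
    rw [integral_zpow]
    · congr 1
      norm_num [zpow_neg]
      ring
    · right
      refine ⟨by norm_num, ?_⟩
      rw [Set.uIcc_of_le (by linarith)]
      intro h
      have := h.1; linarith
  rw [e1, e2]

lemma williamson_inner_calc (a b : ℝ) (ha : 0 < a) (hb : 0 < b) :
    ∫ u in Ioo (0:ℝ) 1, (if u < 1 - a ∧ u < 1 - b then 1 - a*b/(1-u)^2 else 0) =
      max (1-a) 0 * max (1-b) 0 := by
  set c := min (1-a) (1-b) with hc
  have hcond : ∀ u : ℝ, (u < 1 - a ∧ u < 1 - b) ↔ u < c := fun u => (lt_min_iff).symm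
  rcases le_or_gt c 0 with hc0 | hc0
  · have hz : ∀ u ∈ Ioo (0:ℝ) 1,
        (if u < 1 - a ∧ u < 1 - b then 1 - a*b/(1-u)^2 else 0) = 0 := by
      intro u hu
      rw [if_neg]
      rw [hcond]
      exact not_lt.2 (hc0.trans hu.1.le)
    rw [setIntegral_congr_fun measurableSet_Ioo hz, integral_zero]
    rcases min_le_iff.1 hc0 with h | h
    · rw [max_eq_right h, zero_mul]
    · rw [max_eq_right h, mul_zero]
  · have ha1 : a < 1 := by have := min_le_left (1-a) (1-b); rw [← hc] at this; linarith
    have hb1 : b < 1 := by have := min_le_right (1-a) (1-b); rw [← hc] at this; linarith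
    have hc1 : c < 1 := by have := min_le_left (1-a) (1-b); rw [← hc] at this; linarith
    have step1 : ∫ u in Ioo (0:ℝ) 1, (if u < 1 - a ∧ u < 1 - b then 1 - a*b/(1-u)^2 else 0) =
        ∫ u in Ioo (0:ℝ) c, (if u < 1 - a ∧ u < 1 - b then 1 - a*b/(1-u)^2 else 0) := by
      apply setIntegral_eq_of_subset_of_forall_diff_eq_zero measurableSet_Ioo
        (Ioo_subset_Ioo_right hc1.le)
      intro u hu
      rw [if_neg]
      rw [hcond]
      have : ¬ (0 < u ∧ u < c) := hu.2
      push_neg at this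
      exact not_lt.2 (this hu.1.1)
    have step2 : ∫ u in Ioo (0:ℝ) c, (if u < 1 - a ∧ u < 1 - b then 1 - a*b/(1-u)^2 else 0) =
        ∫ u in Ioo (0:ℝ) c, (1 - a*b/(1-u)^2) := by
      apply setIntegral_congr_fun measurableSet_Ioo
      intro u hu
      simp only []
      rw [if_pos ((hcond u).2 hu.2)]
    rw [step1, step2, ← integral_Ioc_eq_integral_Ioo, ← intervalIntegral.integral_of_le hc0.le,
      williamson_interval_calc a b c hc0 hc1]
    rw [max_eq_left (by linarith), max_eq_left (by linarith)]
    rcases min_cases (1-a) (1-b) with ⟨h1, h2⟩ | ⟨h1, h2⟩ <;> rw [hc, h1] <;>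
      · field_simp [ha.ne', hb.ne']
        ring


/-- The Kendall convolution `μ = ν₁ △_α ν₂` is characterized by its cdf:
`μ(Iic t) = ∫∫ (1 - x^α y^α / t^(2α)) 1_{x<t, y<t} dν₁(x) dν₂(y)`.
The Williamson transform is multiplicative with respect to it. -/
theorem williamson_multiplicative_kendall
    (α : ℝ) (hα : 0 < α)
    (ν₁ ν₂ μ : Measure ℝ)
    [IsProbabilityMeasure ν₁] [IsProbabilityMeasure ν₂] [IsProbabilityMeasure μ]
    (h₁ : ν₁ (Set.Iic 0) = 0) (h₂ : ν₂ (Set.Iic 0) = 0) (hμ0 : μ (Set.Iic 0) = 0)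
    (hμ : ∀ t : ℝ, 0 < t → (μ (Set.Iic t)).toReal =
      ∫ x, ∫ y, (if x < t ∧ y < t then 1 - x ^ α * y ^ α / t ^ (2 * α) else 0) ∂ν₂ ∂ν₁)
    (t : ℝ) (ht : 0 ≤ t) :
    ∫ x, max (1 - (x * t) ^ α) 0 ∂μ =
      (∫ x, max (1 - (x * t) ^ α) 0 ∂ν₁) * (∫ x, max (1 - (x * t) ^ α) 0 ∂ν₂) := by
  rcases eq_or_lt_of_le ht with h0 | htpos
  · -- t = 0 case
    simp [← h0, Real.zero_rpow hα.ne']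
  -- main case: 0 < t
  set f : ℝ → ℝ := fun x => max (1 - (x * t) ^ α) 0 with hfdef
  -- a.e. positivity
  have aepos : ∀ (m : Measure ℝ), m (Set.Iic 0) = 0 → ∀ᵐ x ∂m, 0 < x := by
    intro m hm
    have : ∀ᵐ x ∂m, x ∉ Set.Iic 0 := (measure_eq_zero_iff_ae_notMem).1 hm
    filter_upwards [this] with x hx
    simpa using hx
  -- continuity / measurability
  have hcont : Continuous fun z : ℝ => (z * t) ^ α :=
    (Real.continuous_rpow_const hα.le).comp (continuous_id.mul continuous_const)
  have hfm : Measurable f := ((continuous_const.sub hcont).max continuous_const).measurable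
  have hf_nn : ∀ x, 0 ≤ f x := fun x => le_max_right _ _
  have hf_le1 : ∀ x, 0 ≤ x → f x ≤ 1 := by
    intro x hx
    have : 0 ≤ (x * t) ^ α := Real.rpow_nonneg (mul_nonneg hx ht) α
    exact max_le (by linarith) zero_le_one
  have hf_lt1 : ∀ x, 0 < x → f x < 1 := by
    intro x hx
    have : 0 < (x * t) ^ α := Real.rpow_pos_of_pos (mul_pos hx htpos) α
    exact max_lt (by linarith) one_pos
  have hint : Integrable f μ := by
    apply (integrable_const (1:ℝ)).mono' hfm.aestronglyMeasurable
    filter_upwards [aepos μ hμ0] with x hx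
    rw [Real.norm_eq_abs, abs_of_nonneg (hf_nn x)]
    exact hf_le1 x hx.le
  -- the kernel K
  set K : ℝ → ℝ → ℝ → ℝ := fun u x y =>
    if 0 < x ∧ 0 < y ∧ u < 1 - (x * t) ^ α ∧ u < 1 - (y * t) ^ α then
      1 - (x * t) ^ α * (y * t) ^ α / (1 - u) ^ 2
    else 0 with hKdef
  -- layer cake
  rw [hint.integral_eq_integral_meas_le (Eventually.of_forall hf_nn)]
  -- restrict to Ioo 0 1
  rw [setIntegral_eq_of_subset_of_forall_diff_eq_zero measurableSet_Ioi Ioo_subset_Ioi_self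
    (by
      intro u hu
      have hu1 : 1 ≤ u := by
        rcases hu with ⟨hu0, hu'⟩
        by_contra h
        exact hu' ⟨hu0, not_le.1 h⟩
      have hz : μ {x | u ≤ f x} = 0 := by
        apply measure_mono_null _ hμ0
        intro x hx
        by_contra hx0
        have hxp : 0 < x := not_le.1 hx0
        have := hf_lt1 x hxp
        have : (1:ℝ) ≤ f x := le_trans hu1 hx
        linarith [hf_lt1 x hxp]
      rw [measureReal_def, hz]
      simp)]
  -- rewrite the integrand on Ioo 0 1 using hμ
  have key : ∀ u ∈ Ioo (0:ℝ) 1,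
      ENNReal.toReal (μ {x | u ≤ f x}) = ∫ x, ∫ y, K u x y ∂ν₂ ∂ν₁ := by
    intro u hu
    obtain ⟨hu0, hu1⟩ := hu
    have h1u : 0 < 1 - u := by linarith
    set s : ℝ := (1 - u) ^ (1/α) / t with hsdef
    have hs : 0 < s := div_pos (Real.rpow_pos_of_pos h1u _) htpos
    have hpow : ((1 - u) ^ (1/α)) ^ α = 1 - u := by
      rw [← Real.rpow_mul h1u.le, one_div, inv_mul_cancel₀ hα.ne', Real.rpow_one]
    -- characterize the level set
    have hset : μ {x | u ≤ f x} = μ (Set.Iic s) := by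
      apply measure_congr
      apply Filter.eventuallyEq_set.2
      filter_upwards [aepos μ hμ0] with x hx
      have hxt : 0 ≤ x * t := mul_nonneg hx.le ht
      have step : (x * t) ^ α ≤ 1 - u ↔ x ≤ s := by
        rw [← hpow, Real.rpow_le_rpow_iff hxt (Real.rpow_nonneg h1u.le _) hα, hsdef,
          le_div_iff₀ htpos]
      constructor
      · intro hle
        have : u ≤ 1 - (x * t) ^ α := by
          rcases le_max_iff.1 hle with h | h
          · exact h
          · linarith
        exact step.1 (by linarith)
      · intro hle
        have : (x * t) ^ α ≤ 1 - u := step.2 hle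
        exact le_max_iff.2 (Or.inl (by linarith))
    rw [hset, hμ s hs]
    -- now transform the double integral
    have hiff : ∀ z : ℝ, 0 < z → (z < s ↔ u < 1 - (z * t) ^ α) := by
      intro z hz
      have base : z < s ↔ (z * t) ^ α < 1 - u := by
        rw [← hpow, Real.rpow_lt_rpow_iff (mul_nonneg hz.le ht) (Real.rpow_nonneg h1u.le _) hα,
          hsdef, lt_div_iff₀ htpos]
      rw [base]
      constructor <;> intro <;> linarith
    have hs2 : s ^ (2 * α) = (1 - u) ^ 2 / t ^ (2 * α) := by
      rw [hsdef, Real.div_rpow (Real.rpow_nonneg h1u.le _) htpos.le,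
        ← Real.rpow_mul h1u.le, show (1/α) * (2 * α) = 2 by field_simp, Real.rpow_two]
    have ht2 : t ^ (2 * α) = t ^ α * t ^ α := by
      rw [two_mul, Real.rpow_add htpos]
    apply integral_congr_ae
    filter_upwards [aepos ν₁ h₁] with x hx
    apply integral_congr_ae
    filter_upwards [aepos ν₂ h₂] with y hy
    show (if x < s ∧ y < s then 1 - x ^ α * y ^ α / s ^ (2 * α) else 0) = K u x y
    simp only [hKdef]
    by_cases hcond : x < s ∧ y < s
    · rw [if_pos hcond,
        if_pos ⟨hx, hy, (hiff x hx).1 hcond.1, (hiff y hy).1 hcond.2⟩]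
      congr 1
      rw [hs2, ht2, Real.mul_rpow hx.le ht, Real.mul_rpow hy.le ht]
      have htα : t ^ α ≠ 0 := (Real.rpow_pos_of_pos htpos α).ne'
      have h1u2 : ((1:ℝ) - u) ^ 2 ≠ 0 := (pow_pos h1u 2).ne'
      field_simp
    · rw [if_neg hcond, if_neg (by
        rintro ⟨-, -, h3, h4⟩
        exact hcond ⟨(hiff x hx).2 h3, (hiff y hy).2 h4⟩)]
  rw [setIntegral_congr_fun measurableSet_Ioo (fun u hu => (measureReal_def μ _).trans (key u hu))]
  -- measurability and boundedness of K
  have hrm : Measurable fun z : ℝ => (z * t) ^ α := hcont.measurable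
  have hK1 : ∀ u x y, ‖K u x y‖ ≤ 1 := by
    intro u x y
    simp only [hKdef]
    split_ifs with h
    · obtain ⟨hx, hy, hxu, hyu⟩ := h
      have ha : 0 < (x * t) ^ α := Real.rpow_pos_of_pos (mul_pos hx htpos) α
      have hb : 0 < (y * t) ^ α := Real.rpow_pos_of_pos (mul_pos hy htpos) α
      have h1u : 0 < 1 - u := by linarith
      have hle : (x * t) ^ α * (y * t) ^ α ≤ (1 - u) ^ 2 := by nlinarith
      have hdiv0 : 0 ≤ (x * t) ^ α * (y * t) ^ α / (1 - u) ^ 2 := by positivity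
      have hdiv1 : (x * t) ^ α * (y * t) ^ α / (1 - u) ^ 2 ≤ 1 := by
        rw [div_le_one (by positivity)]; exact hle
      rw [Real.norm_eq_abs, abs_le]
      constructor <;> linarith
    · simp
  have m1 : Measurable fun p : (ℝ × ℝ) × ℝ => p.1.1 := measurable_fst.fst
  have m2 : Measurable fun p : (ℝ × ℝ) × ℝ => p.1.2 := measurable_fst.snd
  have m3 : Measurable fun p : (ℝ × ℝ) × ℝ => p.2 := measurable_snd
  have hKm : Measurable fun p : (ℝ × ℝ) × ℝ => K p.1.1 p.1.2 p.2 := by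
    simp only [hKdef]
    apply Measurable.ite
    · exact (measurableSet_lt measurable_const m2).inter
        ((measurableSet_lt measurable_const m3).inter
          ((measurableSet_lt m1 (measurable_const.sub (hrm.comp m2))).inter
            (measurableSet_lt m1 (measurable_const.sub (hrm.comp m3)))))
    · exact measurable_const.sub
        (((hrm.comp m2).mul (hrm.comp m3)).div ((measurable_const.sub m1).pow_const 2))
    · exact measurable_const
  haveI hfin : IsFiniteMeasure (volume.restrict (Ioo (0:ℝ) 1)) := by
    constructor
    rw [Measure.restrict_apply_univ, Real.volume_Ioo]
    exact ENNReal.ofReal_lt_top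
  -- first Fubini swap
  have hsm1 : StronglyMeasurable fun q : ℝ × ℝ => ∫ y, K q.1 q.2 y ∂ν₂ :=
    hKm.stronglyMeasurable.integral_prod_right'
  have hInt1 : Integrable (Function.uncurry fun u x => ∫ y, K u x y ∂ν₂)
      ((volume.restrict (Ioo (0:ℝ) 1)).prod ν₁) := by
    have huc : (Function.uncurry fun u x => ∫ y, K u x y ∂ν₂) =
        fun q : ℝ × ℝ => ∫ y, K q.1 q.2 y ∂ν₂ := rfl
    rw [huc]
    apply (integrable_const (1:ℝ)).mono' hsm1.aestronglyMeasurable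
    apply ae_of_all
    intro q
    calc ‖∫ y, K q.1 q.2 y ∂ν₂‖ ≤ 1 * (ν₂ univ).toReal :=
          norm_integral_le_of_norm_le_const (Eventually.of_forall fun y => hK1 _ _ _)
      _ = 1 := by simp
  rw [integral_integral_swap hInt1]
  rw [← integral_mul_const]
  apply integral_congr_ae
  filter_upwards [aepos ν₁ h₁] with x hx
  -- second Fubini swap (x fixed)
  have hmx : Measurable fun p : ℝ × ℝ => K p.1 x p.2 :=
    hKm.comp ((measurable_fst.prodMk measurable_const).prodMk measurable_snd)
  have hInt2 : Integrable (Function.uncurry fun u y => K u x y)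
      ((volume.restrict (Ioo (0:ℝ) 1)).prod ν₂) := by
    have huc : (Function.uncurry fun u y => K u x y) = fun p : ℝ × ℝ => K p.1 x p.2 := rfl
    rw [huc]
    apply (integrable_const (1:ℝ)).mono' hmx.aestronglyMeasurable
    exact ae_of_all _ fun p => hK1 _ _ _
  rw [integral_integral_swap hInt2]
  rw [← integral_const_mul]
  apply integral_congr_ae
  filter_upwards [aepos ν₂ h₂] with y hy
  have ha : 0 < (x * t) ^ α := Real.rpow_pos_of_pos (mul_pos hx htpos) α
  have hb : 0 < (y * t) ^ α := Real.rpow_pos_of_pos (mul_pos hy htpos) α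
  have hKxy : ∀ u : ℝ, K u x y =
      (if u < 1 - (x * t) ^ α ∧ u < 1 - (y * t) ^ α then
        1 - (x * t) ^ α * ((y * t) ^ α) / (1 - u) ^ 2 else 0) := by
    intro u
    simp only [hKdef]
    rw [if_congr (show (0 < x ∧ 0 < y ∧ u < 1 - (x * t) ^ α ∧ u < 1 - (y * t) ^ α) ↔
      (u < 1 - (x * t) ^ α ∧ u < 1 - (y * t) ^ α) by tauto) rfl rfl]
  simp only [hKxy]
  exact williamson_inner_calc _ _ ha hb
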